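/- For every Kripke structure K and every left-positive InqLTL formula φ, and for every macro-path ρ of K: ρ ⊨_K φ under the macro-path semantics if and only if Paths_K(ρ) ⊨_K φ, i.e., the team of traces induced by the paths in Paths_K(ρ) satisfies φ under the InqLTL team semantics. -/

import Mathlib

/-- A trace over the set `AP` of atomic propositions. -/
abbrev Trace (AP : Type) := ℕ → Set AP

/-- A team: a set of traces. -/
abbrev Team (AP : Type) := Set (Trace AP)

/-- The suffix `w≥i` of a trace. -/
def Trace.shift {AP : Type} (w : Trace AP) (i : ℕ) : Trace AP := fun j => w (i + j)

/-- The suffix team `L≥i`. -/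
def Team.shift {AP : Type} (L : Team AP) (i : ℕ) : Team AP := (fun w => Trace.shift w i) '' L

/-- InqLTL formulas over `AP`. -/
inductive InqForm (AP : Type) : Type where
  | bot
  | atom (p : AP)
  | or (φ ψ : InqForm AP)
  | and (φ ψ : InqForm AP)
  | imp (φ ψ : InqForm AP)
  | next (φ : InqForm AP)
  | untl (φ ψ : InqForm AP)
  | rel (φ ψ : InqForm AP)

/-- Team satisfaction for InqLTL. -/
def InqForm.sat {AP : Type} : InqForm AP → Team AP → Prop
  | .bot, L => L = ∅
  | .atom p, L => ∀ w ∈ L, p ∈ w 0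
  | .or φ ψ, L => φ.sat L ∨ ψ.sat L
  | .and φ ψ, L => φ.sat L ∧ ψ.sat L
  | .imp φ ψ, L => ∀ L' ⊆ L, φ.sat L' → ψ.sat L'
  | .next φ, L => φ.sat (L.shift 1)
  | .untl φ ψ, L => ∃ i, ψ.sat (L.shift i) ∧ ∀ k < i, φ.sat (L.shift k)
  | .rel φ ψ, L => ∀ i, ψ.sat (L.shift i) ∨ ∃ k < i, φ.sat (L.shift k)

/-- Positive InqLTL formulas: `φ ::= ⊥ | p | ¬p | φ ⊕ φ | φ ∧ φ | X φ | φ U φ | φ R φ`,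
where `¬p` abbreviates `p → ⊥`. -/
def InqForm.isPositive {AP : Type} : InqForm AP → Prop
  | .bot => True
  | .atom _ => True
  | .imp (.atom _) .bot => True
  | .imp _ _ => False
  | .or φ ψ => φ.isPositive ∧ ψ.isPositive
  | .and φ ψ => φ.isPositive ∧ ψ.isPositive
  | .next φ => φ.isPositive
  | .untl φ ψ => φ.isPositive ∧ ψ.isPositive
  | .rel φ ψ => φ.isPositive ∧ ψ.isPositive

/-- Left-positive InqLTL formulas:
`φ ::= ⊥ | p | ¬ξ | φ ⊕ φ | φ ∧ φ | ψ → φ | X φ | φ U φ | φ R φ`,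
where `ξ` is an arbitrary InqLTL formula, `ψ` is a positive InqLTL formula, and
`¬ξ` abbreviates `ξ → ⊥`. -/
def InqForm.isLeftPositive {AP : Type} : InqForm AP → Prop
  | .bot => True
  | .atom _ => True
  | .imp ψ φ => φ = .bot ∨ (ψ.isPositive ∧ φ.isLeftPositive)
  | .or φ ψ => φ.isLeftPositive ∧ ψ.isLeftPositive
  | .and φ ψ => φ.isLeftPositive ∧ ψ.isLeftPositive
  | .next φ => φ.isLeftPositive
  | .untl φ ψ => φ.isLeftPositive ∧ ψ.isLeftPositive
  | .rel φ ψ => φ.isLeftPositive ∧ ψ.isLeftPositive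

/-- A Kripke structure over `AP` with states `S`: a set of initial states, a
left-total transition relation, and a labelling of states by propositions. -/
structure Kripke (AP S : Type) where
  init : Set S
  R : S → S → Prop
  leftTotal : ∀ s, ∃ s', R s s'
  lab : S → Set AP

/-- A path of `K`. -/
def Kripke.IsPath {AP S : Type} (K : Kripke AP S) (π : ℕ → S) : Prop :=
  ∀ i, K.R (π i) (π (i + 1))

/-- `T'` is a successor macro-state of `T`. -/
def Kripke.MSucc {AP S : Type} (K : Kripke AP S) (T T' : Set S) : Prop :=
  (∀ s ∈ T, ∃ s' ∈ T', K.R s s') ∧ (∀ s' ∈ T', ∃ s ∈ T, K.R s s')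

/-- A macro-path of `K`: an infinite sequence of macro-states, each a successor
of the previous one. -/
def Kripke.IsMacroPath {AP S : Type} (K : Kripke AP S) (ρ : ℕ → Set S) : Prop :=
  ∀ i, K.MSucc (ρ i) (ρ (i + 1))

/-- `Paths_K(ρ)`: the set of paths of `K` encoded by the macro-path `ρ`. -/
def Kripke.PathsIn {AP S : Type} (K : Kripke AP S) (ρ : ℕ → Set S) : Set (ℕ → S) :=
  {π | K.IsPath π ∧ ∀ i, π i ∈ ρ i}

/-- The suffix `ρ≥i` of a macro-path. -/
def mshift {S : Type} (ρ : ℕ → Set S) (i : ℕ) : ℕ → Set S := fun j => ρ (i + j)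

/-- The macro-path semantics `ρ ⊨_K φ` of InqLTL. -/
def Kripke.msat {AP S : Type} (K : Kripke AP S) : InqForm AP → (ℕ → Set S) → Prop
  | .bot, ρ => K.PathsIn ρ = ∅
  | .atom p, ρ => ∀ s ∈ ρ 0, p ∈ K.lab s
  | .or φ ψ, ρ => K.msat φ ρ ∨ K.msat ψ ρ
  | .and φ ψ, ρ => K.msat φ ρ ∧ K.msat ψ ρ
  | .imp φ ψ, ρ =>
      ∀ ρ', K.IsMacroPath ρ' → (∀ i, ρ' i ⊆ ρ i) → K.msat φ ρ' → K.msat ψ ρ'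
  | .next φ, ρ => K.msat φ (mshift ρ 1)
  | .untl φ ψ, ρ => ∃ i, K.msat ψ (mshift ρ i) ∧ ∀ k < i, K.msat φ (mshift ρ k)
  | .rel φ ψ, ρ => ∀ i, K.msat ψ (mshift ρ i) ∨ ∃ k < i, K.msat φ (mshift ρ k)

/-- The trace induced by a path of `K`. -/
def Kripke.traceOf {AP S : Type} (K : Kripke AP S) (π : ℕ → S) : Trace AP :=
  fun i => K.lab (π i)

/-- `L_K(Π)`: the team of traces induced by a set of paths of `K`. -/
def Kripke.teamOf {AP S : Type} (K : Kripke AP S) (Ps : Set (ℕ → S)) : Team AP :=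
  K.traceOf '' Ps

section MyAux

variable {AP S : Type}

lemma my_sat_mono : ∀ (φ : InqForm AP) {L L' : Team AP}, L' ⊆ L → φ.sat L → φ.sat L' := by
  intro φ
  induction φ with
  | bot =>
    intro L L' h hs
    simp only [InqForm.sat] at *
    subst hs
    exact Set.subset_empty_iff.mp h
  | atom p =>
    intro L L' h hs
    exact fun w hw => hs w (h hw)
  | or φ ψ ihφ ihψ =>
    intro L L' h hs
    rcases hs with hs | hs
    · exact Or.inl (ihφ h hs)
    · exact Or.inr (ihψ h hs)
  | and φ ψ ihφ ihψ =>
    intro L L' h hs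
    exact ⟨ihφ h hs.1, ihψ h hs.2⟩
  | imp φ ψ ihφ ihψ =>
    intro L L' h hs
    exact fun L'' h'' => hs L'' (h''.trans h)
  | next φ ihφ =>
    intro L L' h hs
    exact ihφ (Set.image_mono h) hs
  | untl φ ψ ihφ ihψ =>
    intro L L' h hs
    obtain ⟨i, h2, h1⟩ := hs
    exact ⟨i, ihψ (Set.image_mono h) h2, fun k hk => ihφ (Set.image_mono h) (h1 k hk)⟩
  | rel φ ψ ihφ ihψ =>
    intro L L' h hs i
    rcases hs i with h2 | ⟨k, hk, h1⟩
    · exact Or.inl (ihψ (Set.image_mono h) h2)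
    · exact Or.inr ⟨k, hk, ihφ (Set.image_mono h) h1⟩

lemma my_pathsIn_mono (K : Kripke AP S) {ρ ρ' : ℕ → Set S} (h : ∀ i, ρ' i ⊆ ρ i) :
    K.PathsIn ρ' ⊆ K.PathsIn ρ :=
  fun π hπ => ⟨hπ.1, fun i => h i (hπ.2 i)⟩

lemma my_mshift_mp (K : Kripke AP S) {ρ : ℕ → Set S} (hρ : K.IsMacroPath ρ) (i : ℕ) :
    K.IsMacroPath (mshift ρ i) := by
  intro j
  have := hρ (i + j)
  simpa [mshift, Nat.add_assoc] using this

lemma my_msat_mono (K : Kripke AP S) :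
    ∀ (φ : InqForm AP) {ρ ρ' : ℕ → Set S}, K.IsMacroPath ρ' → (∀ i, ρ' i ⊆ ρ i) →
      K.msat φ ρ → K.msat φ ρ' := by
  intro φ
  induction φ with
  | bot =>
    intro ρ ρ' hmp h hs
    simp only [Kripke.msat] at *
    exact Set.subset_empty_iff.mp (hs ▸ my_pathsIn_mono K h)
  | atom p =>
    intro ρ ρ' hmp h hs
    exact fun s hsmem => hs s (h 0 hsmem)
  | or φ ψ ihφ ihψ =>
    intro ρ ρ' hmp h hs
    rcases hs with hs | hs
    · exact Or.inl (ihφ hmp h hs)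
    · exact Or.inr (ihψ hmp h hs)
  | and φ ψ ihφ ihψ =>
    intro ρ ρ' hmp h hs
    exact ⟨ihφ hmp h hs.1, ihψ hmp h hs.2⟩
  | imp φ ψ ihφ ihψ =>
    intro ρ ρ' hmp h hs
    exact fun ρ'' hmp'' h'' => hs ρ'' hmp'' (fun i => (h'' i).trans (h i))
  | next φ ihφ =>
    intro ρ ρ' hmp h hs
    exact ihφ (my_mshift_mp K hmp 1) (fun j => h (1 + j)) hs
  | untl φ ψ ihφ ihψ =>
    intro ρ ρ' hmp h hs
    obtain ⟨i, h2, h1⟩ := hs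
    exact ⟨i, ihψ (my_mshift_mp K hmp i) (fun j => h (i + j)) h2,
      fun k hk => ihφ (my_mshift_mp K hmp k) (fun j => h (k + j)) (h1 k hk)⟩
  | rel φ ψ ihφ ihψ =>
    intro ρ ρ' hmp h hs i
    rcases hs i with h2 | ⟨k, hk, h1⟩
    · exact Or.inl (ihψ (my_mshift_mp K hmp i) (fun j => h (i + j)) h2)
    · exact Or.inr ⟨k, hk, ihφ (my_mshift_mp K hmp k) (fun j => h (k + j)) h1⟩

lemma my_msucc_empty (K : Kripke AP S) : K.MSucc (∅ : Set S) (∅ : Set S) :=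
  ⟨fun s hs => absurd hs (Set.notMem_empty s), fun s hs => absurd hs (Set.notMem_empty s)⟩

lemma my_const_empty_mp (K : Kripke AP S) : K.IsMacroPath (fun _ => (∅ : Set S)) :=
  fun _ => my_msucc_empty K

lemma my_pathsIn_const_empty (K : Kripke AP S) : K.PathsIn (fun _ => (∅ : Set S)) = ∅ := by
  ext π
  simp only [Kripke.PathsIn, Set.mem_setOf_eq, Set.mem_empty_iff_false, iff_false, not_and]
  exact fun _ h => (h 0).elim

lemma my_shift_empty {AP : Type} (i : ℕ) : (∅ : Team AP).shift i = ∅ := Set.image_empty _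

lemma my_msat_const_empty (K : Kripke AP S) :
    ∀ (φ : InqForm AP), K.msat φ (fun _ => (∅ : Set S)) ↔ φ.sat (∅ : Team AP) := by
  intro φ
  induction φ with
  | bot =>
    simp [Kripke.msat, InqForm.sat, my_pathsIn_const_empty]
  | atom p =>
    simp [Kripke.msat, InqForm.sat]
  | or φ ψ ihφ ihψ =>
    simp only [Kripke.msat, InqForm.sat]
    rw [ihφ, ihψ]
  | and φ ψ ihφ ihψ =>
    simp only [Kripke.msat, InqForm.sat]
    rw [ihφ, ihψ]
  | imp φ ψ ihφ ihψ =>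
    constructor
    · intro h L' hL' hs
      have hL'e : L' = ∅ := Set.subset_empty_iff.mp hL'
      subst hL'e
      exact ihψ.mp (h (fun _ => ∅) (my_const_empty_mp K) (fun _ => subset_rfl) (ihφ.mpr hs))
    · intro h ρ' hmp hsub hs
      have : ρ' = fun _ => (∅ : Set S) := funext fun i => Set.subset_empty_iff.mp (hsub i)
      subst this
      exact ihψ.mpr (h ∅ subset_rfl (ihφ.mp hs))
  | next φ ihφ =>
    show K.msat φ (fun _ => ∅) ↔ φ.sat ((∅ : Team AP).shift 1)
    rw [my_shift_empty]
    exact ihφ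
  | untl φ ψ ihφ ihψ =>
    show (∃ i, K.msat ψ (fun _ => ∅) ∧ ∀ k < i, K.msat φ (fun _ => ∅)) ↔
      (∃ i, ψ.sat ((∅ : Team AP).shift i) ∧ ∀ k < i, φ.sat ((∅ : Team AP).shift k))
    simp only [my_shift_empty]
    constructor
    · rintro ⟨i, h2, h1⟩; exact ⟨i, ihψ.mp h2, fun k hk => ihφ.mp (h1 k hk)⟩
    · rintro ⟨i, h2, h1⟩; exact ⟨i, ihψ.mpr h2, fun k hk => ihφ.mpr (h1 k hk)⟩
  | rel φ ψ ihφ ihψ =>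
    show (∀ i, K.msat ψ (fun _ => ∅) ∨ ∃ k < i, K.msat φ (fun _ => ∅)) ↔
      (∀ i, ψ.sat ((∅ : Team AP).shift i) ∨ ∃ k < i, φ.sat ((∅ : Team AP).shift k))
    simp only [my_shift_empty]
    constructor
    · intro h i
      rcases h i with h2 | ⟨k, hk, h1⟩
      · exact Or.inl (ihψ.mp h2)
      · exact Or.inr ⟨k, hk, ihφ.mp h1⟩
    · intro h i
      rcases h i with h2 | ⟨k, hk, h1⟩
      · exact Or.inl (ihψ.mpr h2)
      · exact Or.inr ⟨k, hk, ihφ.mpr h1⟩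

end MyAux
section MyAux2

variable {AP S : Type}

lemma my_exists_path_from (K : Kripke AP S) {ρ : ℕ → Set S} (hρ : K.IsMacroPath ρ)
    {s : S} (hs : s ∈ ρ 0) : ∃ π, π ∈ K.PathsIn ρ ∧ π 0 = s := by
  have step : ∀ i (x : {t // t ∈ ρ i}), ∃ t', t' ∈ ρ (i + 1) ∧ K.R x.1 t' := by
    intro i x
    obtain ⟨t', ht', hR⟩ := (hρ i).1 x.1 x.2
    exact ⟨t', ht', hR⟩
  let g : (i : ℕ) → {t // t ∈ ρ i} :=
    fun i => Nat.rec ⟨s, hs⟩ (fun i x => ⟨(step i x).choose, (step i x).choose_spec.1⟩) i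
  refine ⟨fun i => (g i).1, ⟨fun i => ?_, fun i => (g i).2⟩, rfl⟩
  exact (step i (g i)).choose_spec.2

lemma my_extend_back (K : Kripke AP S) :
    ∀ (i : ℕ) (ρ : ℕ → Set S), K.IsMacroPath ρ →
      ∀ π', π' ∈ K.PathsIn (mshift ρ i) → ∃ π ∈ K.PathsIn ρ, ∀ j, π (i + j) = π' j := by
  intro i
  induction i with
  | zero =>
    intro ρ hρ π' hπ'
    refine ⟨π', ⟨hπ'.1, fun j => ?_⟩, fun j => by rw [Nat.zero_add]⟩
    have := hπ'.2 j
    simpa [mshift] using this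
  | succ i ih =>
    intro ρ hρ π' hπ'
    have h0 : π' 0 ∈ ρ (i + 1) := by
      have := hπ'.2 0
      simpa [mshift] using this
    obtain ⟨s, hsmem, hR⟩ := (hρ i).2 (π' 0) h0
    set π'' : ℕ → S := fun j => Nat.casesOn j s (fun k => π' k) with hπ''def
    have hmem'' : π'' ∈ K.PathsIn (mshift ρ i) := by
      constructor
      · intro j
        cases j with
        | zero => exact hR
        | succ k => exact hπ'.1 k
      · intro j
        cases j with
        | zero => show s ∈ ρ (i + 0); exact hsmem
        | succ k =>
          show π' k ∈ ρ (i + (k + 1))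
          rw [show i + (k + 1) = i + 1 + k from by omega]
          exact hπ'.2 k
    obtain ⟨π, hπ, heq⟩ := ih ρ hρ π'' hmem''
    refine ⟨π, hπ, fun j => ?_⟩
    have := heq (j + 1)
    rw [show i + 1 + j = i + (j + 1) from by omega]
    exact this

lemma my_teamOf_mshift (K : Kripke AP S) {ρ : ℕ → Set S} (hρ : K.IsMacroPath ρ) (i : ℕ) :
    K.teamOf (K.PathsIn (mshift ρ i)) = (K.teamOf (K.PathsIn ρ)).shift i := by
  ext w
  constructor
  · rintro ⟨π', hπ', rfl⟩
    obtain ⟨π, hπ, heq⟩ := my_extend_back K i ρ hρ π' hπ'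
    refine ⟨K.traceOf π, ⟨π, hπ, rfl⟩, ?_⟩
    funext j
    show K.lab (π (i + j)) = K.lab (π' j)
    rw [heq j]
  · rintro ⟨w, ⟨π, hπ, rfl⟩, rfl⟩
    refine ⟨fun j => π (i + j), ⟨fun j => hπ.1 (i + j), fun j => hπ.2 (i + j)⟩, rfl⟩

end MyAux2
section MyAux3

variable {AP S : Type}

lemma my_sigma_mp (K : Kripke AP S) {π : ℕ → S} (hπ : K.IsPath π) :
    K.IsMacroPath (fun i => ({π i} : Set S)) := by
  intro i
  constructor
  · rintro s hs
    rw [Set.mem_singleton_iff] at hs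
    exact ⟨π (i + 1), rfl, hs ▸ hπ i⟩
  · rintro s' hs'
    rw [Set.mem_singleton_iff] at hs'
    exact ⟨π i, rfl, hs' ▸ hπ i⟩

lemma my_pathsIn_sigma (K : Kripke AP S) {π : ℕ → S} (hπ : K.IsPath π) :
    K.PathsIn (fun i => ({π i} : Set S)) = {π} := by
  ext π'
  constructor
  · rintro ⟨_, hmem⟩
    exact funext fun i => hmem i
  · rintro rfl
    exact ⟨hπ, fun i => rfl⟩

lemma my_sub_sigma (K : Kripke AP S) {π : ℕ → S} {ρ' : ℕ → Set S}
    (hmp : K.IsMacroPath ρ') (hsub : ∀ i, ρ' i ⊆ ({π i} : Set S)) :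
    ρ' = (fun _ => (∅ : Set S)) ∨ ρ' = fun i => ({π i} : Set S) := by
  rcases Set.subset_singleton_iff_eq.mp (hsub 0) with h0 | h0
  · left
    funext i
    induction i with
    | zero => exact h0
    | succ i ih =>
      rw [Set.eq_empty_iff_forall_notMem]
      intro s' hs'
      obtain ⟨s, hs, _⟩ := (hmp i).2 s' hs'
      rw [ih] at hs
      exact hs
  · right
    funext i
    induction i with
    | zero => exact h0
    | succ i ih =>
      have hne : (ρ' (i + 1)).Nonempty := by
        obtain ⟨s', hs', _⟩ := (hmp i).1 (π i) (by rw [ih]; exact rfl)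
        exact ⟨s', hs'⟩
      rcases Set.subset_singleton_iff_eq.mp (hsub (i + 1)) with h | h
      · exact absurd h (Set.nonempty_iff_ne_empty.mp hne)
      · exact h

lemma my_msat_sigma (K : Kripke AP S) :
    ∀ (ξ : InqForm AP) (π : ℕ → S), K.IsPath π →
      (K.msat ξ (fun i => ({π i} : Set S)) ↔ ξ.sat ({K.traceOf π} : Team AP)) := by
  intro ξ
  induction ξ with
  | bot =>
    intro π hπ
    simp [Kripke.msat, InqForm.sat, my_pathsIn_sigma K hπ]
  | atom p =>
    intro π hπ
    simp [Kripke.msat, InqForm.sat, Kripke.traceOf]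
  | or φ ψ ihφ ihψ =>
    intro π hπ
    simp only [Kripke.msat, InqForm.sat]
    rw [ihφ π hπ, ihψ π hπ]
  | and φ ψ ihφ ihψ =>
    intro π hπ
    simp only [Kripke.msat, InqForm.sat]
    rw [ihφ π hπ, ihψ π hπ]
  | imp φ ψ ihφ ihψ =>
    intro π hπ
    constructor
    · intro h L' hL' hs
      rcases Set.subset_singleton_iff_eq.mp hL' with h0 | h0
      · subst h0
        exact (my_msat_const_empty K ψ).mp
          (h (fun _ => ∅) (my_const_empty_mp K) (fun _ => Set.empty_subset _)
            ((my_msat_const_empty K φ).mpr hs))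
      · subst h0
        exact (ihψ π hπ).mp
          (h (fun i => {π i}) (my_sigma_mp K hπ) (fun _ => subset_rfl) ((ihφ π hπ).mpr hs))
    · intro h ρ' hmp hsub hs
      rcases my_sub_sigma K hmp hsub with h0 | h0
      · subst h0
        exact (my_msat_const_empty K ψ).mpr
          (h ∅ (Set.empty_subset _) ((my_msat_const_empty K φ).mp hs))
      · subst h0
        exact (ihψ π hπ).mpr (h _ subset_rfl ((ihφ π hπ).mp hs))
  | next φ ihφ =>
    intro π hπ
    have hπ' : K.IsPath (fun j => π (1 + j)) := fun j => hπ (1 + j)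
    show K.msat φ (fun j => ({π (1 + j)} : Set S)) ↔ φ.sat (({K.traceOf π} : Team AP).shift 1)
    rw [show ({K.traceOf π} : Team AP).shift 1 = {(K.traceOf π).shift 1} from Set.image_singleton]
    exact ihφ (fun j => π (1 + j)) hπ'
  | untl φ ψ ihφ ihψ =>
    intro π hπ
    have key : ∀ (θ : InqForm AP),
        (∀ (π : ℕ → S), K.IsPath π →
          (K.msat θ (fun i => ({π i} : Set S)) ↔ θ.sat ({K.traceOf π} : Team AP))) →
        ∀ i, (K.msat θ (fun j => ({π (i + j)} : Set S)) ↔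
          θ.sat (({K.traceOf π} : Team AP).shift i)) := by
      intro θ ih i
      rw [show ({K.traceOf π} : Team AP).shift i = {(K.traceOf π).shift i} from
        Set.image_singleton]
      exact ih (fun j => π (i + j)) (fun j => hπ (i + j))
    constructor
    · rintro ⟨i, h2, h1⟩
      exact ⟨i, (key ψ ihψ i).mp h2, fun k hk => (key φ ihφ k).mp (h1 k hk)⟩
    · rintro ⟨i, h2, h1⟩
      exact ⟨i, (key ψ ihψ i).mpr h2, fun k hk => (key φ ihφ k).mpr (h1 k hk)⟩
  | rel φ ψ ihφ ihψ =>
    intro π hπ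
    have key : ∀ (θ : InqForm AP),
        (∀ (π : ℕ → S), K.IsPath π →
          (K.msat θ (fun i => ({π i} : Set S)) ↔ θ.sat ({K.traceOf π} : Team AP))) →
        ∀ i, (K.msat θ (fun j => ({π (i + j)} : Set S)) ↔
          θ.sat (({K.traceOf π} : Team AP).shift i)) := by
      intro θ ih i
      rw [show ({K.traceOf π} : Team AP).shift i = {(K.traceOf π).shift i} from
        Set.image_singleton]
      exact ih (fun j => π (i + j)) (fun j => hπ (i + j))
    constructor
    · intro h i
      rcases h i with h2 | ⟨k, hk, h1⟩
      · exact Or.inl ((key ψ ihψ i).mp h2)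
      · exact Or.inr ⟨k, hk, (key φ ihφ k).mp h1⟩
    · intro h i
      rcases h i with h2 | ⟨k, hk, h1⟩
      · exact Or.inl ((key ψ ihψ i).mpr h2)
      · exact Or.inr ⟨k, hk, (key φ ihφ k).mpr h1⟩

end MyAux3
section MyAux4

variable {AP S : Type}

lemma my_isPositive_imp {φ ψ : InqForm AP} (h : (InqForm.imp φ ψ).isPositive) :
    ∃ p, φ = .atom p ∧ ψ = .bot := by
  cases φ <;> cases ψ <;> simp_all [InqForm.isPositive]

lemma my_pos_leftPositive : ∀ (φ : InqForm AP), φ.isPositive → φ.isLeftPositive := by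
  intro φ
  induction φ with
  | bot => intro _; trivial
  | atom p => intro _; trivial
  | or φ ψ ihφ ihψ => intro h; exact ⟨ihφ h.1, ihψ h.2⟩
  | and φ ψ ihφ ihψ => intro h; exact ⟨ihφ h.1, ihψ h.2⟩
  | imp φ ψ ihφ ihψ =>
    intro h
    obtain ⟨p, h1, h2⟩ := my_isPositive_imp h
    exact Or.inl h2
  | next φ ihφ => intro h; exact ihφ h
  | untl φ ψ ihφ ihψ => intro h; exact ⟨ihφ h.1, ihψ h.2⟩
  | rel φ ψ ihφ ihψ => intro h; exact ⟨ihφ h.1, ihψ h.2⟩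

/-- Positive formulas are preserved by pointwise-selectable extensions. -/
lemma my_sat_pointwise : ∀ (ψ : InqForm AP), ψ.isPositive → ∀ (L M : Team AP),
    (∀ w' ∈ M, ∀ i, ∃ w ∈ L, w' i = w i) → ψ.sat L → ψ.sat M := by
  intro ψ
  induction ψ with
  | bot =>
    intro _ L M hrel hs
    rw [show L = ∅ from hs] at hrel
    rw [show (InqForm.bot.sat M) = (M = ∅) from rfl, Set.eq_empty_iff_forall_notMem]
    intro w hw
    obtain ⟨w', hw', _⟩ := hrel w hw 0
    exact hw'
  | atom p =>
    intro _ L M hrel hs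
    intro w' hw'
    obtain ⟨w, hw, he⟩ := hrel w' hw' 0
    rw [he]
    exact hs w hw
  | or φ ψ ihφ ihψ =>
    intro hpos L M hrel hs
    rcases hs with hs | hs
    · exact Or.inl (ihφ hpos.1 L M hrel hs)
    · exact Or.inr (ihψ hpos.2 L M hrel hs)
  | and φ ψ ihφ ihψ =>
    intro hpos L M hrel hs
    exact ⟨ihφ hpos.1 L M hrel hs.1, ihψ hpos.2 L M hrel hs.2⟩
  | imp φ ψ ihφ ihψ =>
    intro hpos L M hrel hs
    obtain ⟨p, h1, h2⟩ := my_isPositive_imp hpos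
    subst h1; subst h2
    -- hs : L ⊨ ¬p; conclude ∀ w ∈ L, p ∉ w 0
    have hkey : ∀ w ∈ L, p ∉ w 0 := by
      intro w hw hp
      have := hs {w} (Set.singleton_subset_iff.mpr hw)
        (fun w' hw' => by rw [Set.mem_singleton_iff] at hw'; rw [hw']; exact hp)
      exact Set.singleton_ne_empty w this
    intro L' hL' hatom
    show L' = ∅
    rw [Set.eq_empty_iff_forall_notMem]
    intro w' hw'
    obtain ⟨w, hw, he⟩ := hrel w' (hL' hw') 0
    exact hkey w hw (he ▸ hatom w' hw')
  | next φ ihφ =>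
    intro hpos L M hrel hs
    refine ihφ hpos (L.shift 1) (M.shift 1) ?_ hs
    rintro w' ⟨v, hv, rfl⟩ j
    obtain ⟨w, hw, he⟩ := hrel v hv (1 + j)
    exact ⟨w.shift 1, ⟨w, hw, rfl⟩, he⟩
  | untl φ ψ ihφ ihψ =>
    intro hpos L M hrel hs
    have hshift : ∀ i, ∀ w' ∈ M.shift i, ∀ j, ∃ w ∈ L.shift i, w' j = w j := by
      rintro i w' ⟨v, hv, rfl⟩ j
      obtain ⟨w, hw, he⟩ := hrel v hv (i + j)
      exact ⟨w.shift i, ⟨w, hw, rfl⟩, he⟩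
    obtain ⟨i, h2, h1⟩ := hs
    exact ⟨i, ihψ hpos.2 _ _ (hshift i) h2, fun k hk => ihφ hpos.1 _ _ (hshift k) (h1 k hk)⟩
  | rel φ ψ ihφ ihψ =>
    intro hpos L M hrel hs
    have hshift : ∀ i, ∀ w' ∈ M.shift i, ∀ j, ∃ w ∈ L.shift i, w' j = w j := by
      rintro i w' ⟨v, hv, rfl⟩ j
      obtain ⟨w, hw, he⟩ := hrel v hv (i + j)
      exact ⟨w.shift i, ⟨w, hw, rfl⟩, he⟩
    intro i
    rcases hs i with h2 | ⟨k, hk, h1⟩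
    · exact Or.inl (ihψ hpos.2 _ _ (hshift i) h2)
    · exact Or.inr ⟨k, hk, ihφ hpos.1 _ _ (hshift k) h1⟩

/-- The macro-path generated by a subteam. -/
lemma my_generated (K : Kripke AP S) {ρ : ℕ → Set S} (hρ : K.IsMacroPath ρ)
    (L' : Team AP) (hL' : L' ⊆ K.teamOf (K.PathsIn ρ)) :
    ∃ ρ' : ℕ → Set S, K.IsMacroPath ρ' ∧ (∀ i, ρ' i ⊆ ρ i) ∧
      L' ⊆ K.teamOf (K.PathsIn ρ') ∧
      (∀ w' ∈ K.teamOf (K.PathsIn ρ'), ∀ i, ∃ w ∈ L', w' i = w i) := by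
  refine ⟨fun i => {s | ∃ π, (π ∈ K.PathsIn ρ ∧ K.traceOf π ∈ L') ∧ π i = s}, ?_, ?_, ?_, ?_⟩
  · intro i
    constructor
    · rintro s ⟨π, hπ, rfl⟩
      exact ⟨π (i + 1), ⟨π, hπ, rfl⟩, hπ.1.1 i⟩
    · rintro s' ⟨π, hπ, rfl⟩
      exact ⟨π i, ⟨π, hπ, rfl⟩, hπ.1.1 i⟩
  · rintro i s ⟨π, hπ, rfl⟩
    exact hπ.1.2 i
  · rintro w hw
    obtain ⟨π, hπ, rfl⟩ := hL' hw
    exact ⟨π, ⟨hπ.1, fun i => ⟨π, ⟨hπ, hw⟩, rfl⟩⟩, rfl⟩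
  · rintro w' ⟨π'', hπ'', rfl⟩ i
    obtain ⟨π, ⟨_, htr⟩, heq⟩ := hπ''.2 i
    refine ⟨K.traceOf π, htr, ?_⟩
    show K.lab (π'' i) = K.lab (π i)
    rw [heq]

end MyAux4
section MyMain

variable {AP S : Type}

lemma my_main (K : Kripke AP S) :
    ∀ (φ : InqForm AP), φ.isLeftPositive → ∀ (ρ : ℕ → Set S), K.IsMacroPath ρ →
      (K.msat φ ρ ↔ φ.sat (K.teamOf (K.PathsIn ρ))) := by
  intro φ
  induction φ with
  | bot =>
    intro _ ρ hρ
    simp [Kripke.msat, InqForm.sat, Kripke.teamOf, Set.image_eq_empty]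
  | atom p =>
    intro _ ρ hρ
    constructor
    · rintro hm w ⟨π, hπ, rfl⟩
      exact hm (π 0) (hπ.2 0)
    · intro hs s hs0
      obtain ⟨π, hπ, hπ0⟩ := my_exists_path_from K hρ hs0
      rw [← hπ0]
      exact hs (K.traceOf π) ⟨π, hπ, rfl⟩
  | or φ ψ ihφ ihψ =>
    intro hlp ρ hρ
    simp only [Kripke.msat, InqForm.sat]
    rw [ihφ hlp.1 ρ hρ, ihψ hlp.2 ρ hρ]
  | and φ ψ ihφ ihψ =>
    intro hlp ρ hρ
    simp only [Kripke.msat, InqForm.sat]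
    rw [ihφ hlp.1 ρ hρ, ihψ hlp.2 ρ hρ]
  | imp a b iha ihb =>
    intro hlp ρ hρ
    rcases hlp with hbot | ⟨hpos, hlp⟩
    · subst hbot
      constructor
      · intro h L' hL' hs
        show L' = ∅
        rw [Set.eq_empty_iff_forall_notMem]
        intro w hw
        obtain ⟨π, hπ, rfl⟩ := hL' hw
        have hsing : a.sat {K.traceOf π} :=
          my_sat_mono a (Set.singleton_subset_iff.mpr hw) hs
        have hm : K.msat a (fun i => {π i}) := (my_msat_sigma K a π hπ.1).mpr hsing
        have hbot : K.PathsIn (fun i => ({π i} : Set S)) = ∅ :=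
          h (fun i => {π i}) (my_sigma_mp K hπ.1)
            (fun i => Set.singleton_subset_iff.mpr (hπ.2 i)) hm
        rw [my_pathsIn_sigma K hπ.1] at hbot
        exact Set.singleton_ne_empty π hbot
      · intro h ρ' hmp hsub hm
        show K.PathsIn ρ' = ∅
        rw [Set.eq_empty_iff_forall_notMem]
        intro π hπ
        have hm2 : K.msat a (fun i => {π i}) :=
          my_msat_mono K a (my_sigma_mp K hπ.1)
            (fun i => Set.singleton_subset_iff.mpr (hπ.2 i)) hm
        have hsing := (my_msat_sigma K a π hπ.1).mp hm2
        have hsub' : ({K.traceOf π} : Team AP) ⊆ K.teamOf (K.PathsIn ρ) :=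
          Set.singleton_subset_iff.mpr ⟨π, my_pathsIn_mono K hsub hπ, rfl⟩
        exact Set.singleton_ne_empty _ (h {K.traceOf π} hsub' hsing)
    · constructor
      · intro h L' hL' hs
        obtain ⟨ρ', hmp', hsub', hL'sub, hpw⟩ := my_generated K hρ L' hL'
        have hsψ : a.sat (K.teamOf (K.PathsIn ρ')) := my_sat_pointwise a hpos L' _ hpw hs
        have hmψ : K.msat a ρ' := (iha (my_pos_leftPositive a hpos) ρ' hmp').mpr hsψ
        exact my_sat_mono b hL'sub ((ihb hlp ρ' hmp').mp (h ρ' hmp' hsub' hmψ))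
      · intro h ρ' hmp hsub hm
        have hsψ := (iha (my_pos_leftPositive a hpos) ρ' hmp).mp hm
        have hsub' : K.teamOf (K.PathsIn ρ') ⊆ K.teamOf (K.PathsIn ρ) :=
          Set.image_mono (my_pathsIn_mono K hsub)
        exact (ihb hlp ρ' hmp).mpr (h _ hsub' hsψ)
  | next φ ihφ =>
    intro hlp ρ hρ
    show K.msat φ (mshift ρ 1) ↔ φ.sat ((K.teamOf (K.PathsIn ρ)).shift 1)
    rw [← my_teamOf_mshift K hρ 1]
    exact ihφ hlp (mshift ρ 1) (my_mshift_mp K hρ 1)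
  | untl φ ψ ihφ ihψ =>
    intro hlp ρ hρ
    have keyψ : ∀ i, K.msat ψ (mshift ρ i) ↔ ψ.sat ((K.teamOf (K.PathsIn ρ)).shift i) := by
      intro i
      rw [← my_teamOf_mshift K hρ i]
      exact ihψ hlp.2 _ (my_mshift_mp K hρ i)
    have keyφ : ∀ i, K.msat φ (mshift ρ i) ↔ φ.sat ((K.teamOf (K.PathsIn ρ)).shift i) := by
      intro i
      rw [← my_teamOf_mshift K hρ i]
      exact ihφ hlp.1 _ (my_mshift_mp K hρ i)
    constructor
    · rintro ⟨i, h2, h1⟩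
      exact ⟨i, (keyψ i).mp h2, fun k hk => (keyφ k).mp (h1 k hk)⟩
    · rintro ⟨i, h2, h1⟩
      exact ⟨i, (keyψ i).mpr h2, fun k hk => (keyφ k).mpr (h1 k hk)⟩
  | rel φ ψ ihφ ihψ =>
    intro hlp ρ hρ
    have keyψ : ∀ i, K.msat ψ (mshift ρ i) ↔ ψ.sat ((K.teamOf (K.PathsIn ρ)).shift i) := by
      intro i
      rw [← my_teamOf_mshift K hρ i]
      exact ihψ hlp.2 _ (my_mshift_mp K hρ i)
    have keyφ : ∀ i, K.msat φ (mshift ρ i) ↔ φ.sat ((K.teamOf (K.PathsIn ρ)).shift i) := by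
      intro i
      rw [← my_teamOf_mshift K hρ i]
      exact ihφ hlp.1 _ (my_mshift_mp K hρ i)
    constructor
    · intro h i
      rcases h i with h2 | ⟨k, hk, h1⟩
      · exact Or.inl ((keyψ i).mp h2)
      · exact Or.inr ⟨k, hk, (keyφ k).mp h1⟩
    · intro h i
      rcases h i with h2 | ⟨k, hk, h1⟩
      · exact Or.inl ((keyψ i).mpr h2)
      · exact Or.inr ⟨k, hk, (keyφ k).mpr h1⟩

end MyMain
/-- for left-positive InqLTL formulas, the macro-path semantics
agrees with the team semantics on the set of paths encoded by the macro-path. -/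
theorem leftPositive_msat_iff_team {AP S : Type} [Fintype AP] (K : Kripke AP S)
    (φ : InqForm AP) (hφ : φ.isLeftPositive) (ρ : ℕ → Set S)
    (hρ : K.IsMacroPath ρ) :
    K.msat φ ρ ↔ φ.sat (K.teamOf (K.PathsIn ρ)) := by
  exact my_main K φ hφ ρ hρ
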